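/- For a commutative monoid monomial w = u₁⋯u_k with u_i ∈ Y, the derivation d of weight λ on k[Y] extending d₀ : Y → k[Y] satisfies the closed formula d(w) = Σ_{∅ ≠ I ⊆ {1,…,k}} λ^{|I|−1} v₁⋯v_k, where v_i = d₀(u_i) if i ∈ I and v_i = u_i otherwise. -/

import Mathlib

open MvPolynomial

lemma sum_powerset_map' {α β M : Type*} [DecidableEq α] [DecidableEq β] [AddCommMonoid M]
    (e : α ↪ β) (s : Finset α) (g : Finset β → M) :
    ∑ I ∈ (s.map e).powerset, g I = ∑ J ∈ s.powerset, g (J.map e) := by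
  refine (Finset.sum_bij' (fun J _ => J.map e) (fun I _ => I.preimage e e.injective.injOn)
    ?_ ?_ ?_ ?_ ?_).symm
  · intro J hJ
    rw [Finset.mem_powerset] at *
    exact Finset.map_subset_map.2 hJ
  · intro I hI
    rw [Finset.mem_powerset] at *
    intro a ha
    rw [Finset.mem_preimage] at ha
    obtain ⟨b, hb, hb2⟩ := Finset.mem_map.1 (hI ha)
    rwa [← e.injective hb2]
  · intro J _
    ext a
    simp only [Finset.mem_preimage, Finset.mem_map']
  · intro I hI
    rw [Finset.mem_powerset] at hI
    ext b
    simp only [Finset.mem_map, Finset.mem_preimage]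
    constructor
    · rintro ⟨a, ha, rfl⟩; exact ha
    · intro hb
      obtain ⟨a, _, rfl⟩ := Finset.mem_map.1 (hI hb)
      exact ⟨a, hb, rfl⟩
  · intro J _
    rfl

theorem weighted_derivation_closed_formula
    {k Y : Type*} [CommRing k] (lam : k)
    (d0 : Y → MvPolynomial Y k) (d : MvPolynomial Y k →ₗ[k] MvPolynomial Y k)
    (hone : d 1 = 0)
    (hrec : ∀ (u : Y) (s : Y →₀ ℕ),
      d (X u * monomial s 1) =
        d0 u * monomial s 1 + X u * d (monomial s 1)
          + lam • (d0 u * d (monomial s 1))) :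
    ∀ (n : ℕ) (u : Fin n → Y),
      d (∏ i, X (u i)) =
        ∑ I ∈ (Finset.univ : Finset (Fin n)).powerset.filter
            (fun I => I.Nonempty),
          lam ^ (I.card - 1) •
            ∏ i, (if i ∈ I then d0 (u i) else X (u i)) := by
  intro n
  induction n with
  | zero =>
    intro u
    simp [hone, Finset.filter_singleton]
  | succ n ih =>
    intro u
    set e : Fin n ↪ Fin (n + 1) := ⟨Fin.succ, Fin.succ_injective n⟩ with he
    set Q : Finset (Fin n) → MvPolynomial Y k :=
      fun J => ∏ i : Fin n, (if i ∈ J then d0 (u i.succ) else X (u i.succ)) with hQ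
    set P : MvPolynomial Y k := ∏ i : Fin n, X (u i.succ) with hPdef
    set D : MvPolynomial Y k :=
      ∑ J ∈ (Finset.univ : Finset (Fin n)).powerset.filter (fun J => J.Nonempty),
        lam ^ (J.card - 1) • Q J with hD
    have hP : P = monomial (∑ i : Fin n, Finsupp.single (u i.succ) 1) (1 : k) := by
      rw [monomial_sum_one]
      rfl
    have hdP : d P = D := ih (fun i => u i.succ)
    have hL : d (∏ i, X (u i)) = d0 (u 0) * P + X (u 0) * D + lam • (d0 (u 0) * D) := by
      rw [Fin.prod_univ_succ, ← hPdef, hP, hrec, ← hP, hdP]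
    rw [hL]
    -- membership facts
    have h0J : ∀ J : Finset (Fin n), (0 : Fin (n + 1)) ∉ J.map e := by
      intro J hmem
      obtain ⟨a, _, ha⟩ := Finset.mem_map.1 hmem
      exact Fin.succ_ne_zero a ha
    have huniv : (Finset.univ : Finset (Fin (n + 1))) = insert 0 (Finset.univ.map e) := by
      ext i
      simp only [Finset.mem_univ, true_iff, Finset.mem_insert, Finset.mem_map, Finset.mem_univ,
        true_and]
      cases i using Fin.cases with
      | zero => exact Or.inl rfl
      | succ j => exact Or.inr ⟨j, rfl⟩
    have key : ∀ g : Finset (Fin (n + 1)) → MvPolynomial Y k,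
        ∑ I ∈ (Finset.univ : Finset (Fin (n + 1))).powerset, g I =
          ∑ J ∈ (Finset.univ : Finset (Fin n)).powerset, g (J.map e) +
          ∑ J ∈ (Finset.univ : Finset (Fin n)).powerset, g (insert 0 (J.map e)) := by
      intro g
      rw [huniv, Finset.sum_powerset_insert (h0J Finset.univ), sum_powerset_map',
        sum_powerset_map']
    have hprod1 : ∀ J : Finset (Fin n),
        (∏ i, (if i ∈ J.map e then d0 (u i) else X (u i))) = X (u 0) * Q J := by
      intro J
      rw [Fin.prod_univ_succ]
      congr 1
      · rw [if_neg (h0J J)]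
      · refine Finset.prod_congr rfl fun i _ => ?_
        exact if_congr (Finset.mem_map' e) rfl rfl
    have hprod2 : ∀ J : Finset (Fin n),
        (∏ i, (if i ∈ insert 0 (J.map e) then d0 (u i) else X (u i)))
          = d0 (u 0) * Q J := by
      intro J
      rw [Fin.prod_univ_succ]
      congr 1
      · rw [if_pos (Finset.mem_insert_self 0 _)]
      · refine Finset.prod_congr rfl fun i _ => ?_
        refine if_congr ?_ rfl rfl
        rw [Finset.mem_insert]
        simp only [show ((i.succ : Fin (n + 1)) = 0) ↔ False from
          iff_of_eq (eq_false (Fin.succ_ne_zero i)), false_or]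
        exact Finset.mem_map' e
    rw [Finset.sum_filter,
      key (fun I => if I.Nonempty then
        lam ^ (I.card - 1) • ∏ i, (if i ∈ I then d0 (u i) else X (u i)) else 0)]
    have hA : ∑ J ∈ (Finset.univ : Finset (Fin n)).powerset,
        (if (J.map e).Nonempty then
          lam ^ ((J.map e).card - 1) • ∏ i, (if i ∈ J.map e then d0 (u i) else X (u i))
        else 0) = X (u 0) * D := by
      have hterm : ∀ J ∈ (Finset.univ : Finset (Fin n)).powerset,
          (if (J.map e).Nonempty then
            lam ^ ((J.map e).card - 1) • ∏ i, (if i ∈ J.map e then d0 (u i) else X (u i))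
          else 0) = (if J.Nonempty then X (u 0) * (lam ^ (J.card - 1) • Q J) else 0) := by
        intro J _
        rw [hprod1, Finset.card_map]
        simp only [Finset.map_nonempty]
        split_ifs with h
        · rw [mul_smul_comm]
        · rfl
      rw [Finset.sum_congr rfl hterm, ← Finset.sum_filter, hD, Finset.mul_sum]
    have hB : ∑ J ∈ (Finset.univ : Finset (Fin n)).powerset,
        (if (insert (0 : Fin (n + 1)) (J.map e)).Nonempty then
          lam ^ ((insert (0 : Fin (n + 1)) (J.map e)).card - 1) •
            ∏ i, (if i ∈ insert (0 : Fin (n + 1)) (J.map e) then d0 (u i) else X (u i))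
        else 0) = d0 (u 0) * P + lam • (d0 (u 0) * D) := by
      have hterm : ∀ J ∈ (Finset.univ : Finset (Fin n)).powerset,
          (if (insert (0 : Fin (n + 1)) (J.map e)).Nonempty then
            lam ^ ((insert (0 : Fin (n + 1)) (J.map e)).card - 1) •
              ∏ i, (if i ∈ insert (0 : Fin (n + 1)) (J.map e) then d0 (u i) else X (u i))
          else 0) = lam ^ J.card • (d0 (u 0) * Q J) := by
        intro J _
        rw [if_pos (Finset.insert_nonempty _ _), hprod2,
          Finset.card_insert_of_notMem (h0J J), Finset.card_map, Nat.add_sub_cancel]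
      rw [Finset.sum_congr rfl hterm,
        ← Finset.sum_filter_add_sum_filter_not _ (fun J => J.Nonempty), add_comm]
      congr 1
      · -- the empty set gives d0 u0 * P
        have hfilter : ((Finset.univ : Finset (Fin n)).powerset.filter
            (fun J => ¬ J.Nonempty)) = {∅} := by
          ext J
          simp [Finset.not_nonempty_iff_eq_empty]
        have hQempty : Q ∅ = P := by
          simp [hQ, hPdef]
        rw [hfilter, Finset.sum_singleton, Finset.card_empty, pow_zero, one_smul, hQempty]
      · -- nonempty part gives lam • (d0 u0 * D)
        rw [hD, Finset.mul_sum, Finset.smul_sum]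
        refine Finset.sum_congr rfl fun J hJ => ?_
        have hJne : J.Nonempty := (Finset.mem_filter.1 hJ).2
        have hcard : J.card = (J.card - 1) + 1 :=
          (Nat.succ_pred_eq_of_pos (Finset.card_pos.2 hJne)).symm
        rw [hcard, pow_succ', mul_smul, Nat.add_sub_cancel, mul_smul_comm]
    rw [hA, hB]
    abel
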